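/- Let X be a Banach space and B ⊆ B_{X*} a boundary of the norm (for every x ∈ S_X there is f ∈ B with f(x) = 1). If (x_n) is a bounded sequence in X such that f(x_n) → 0 for every f ∈ B, then x_n → 0 weakly. -/

import Mathlib

open Filter Topology Set

private lemma hasSum_mem_of_convex {X : Type*} [NormedAddCommGroup X] [NormedSpace ℝ X]
    (s : Set X) (hs : Convex ℝ s) (hcl : IsClosed s) (z : ℕ → X) (hz : ∀ k, z k ∈ s)
    (w : ℕ → ℝ) (hw0 : ∀ k, 0 ≤ w k) (hw1 : HasSum w 1)
    (T : X) (hT : HasSum (fun k => w k • z k) T) : T ∈ s := by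
  set W : ℕ → ℝ := fun m => ∑ k ∈ Finset.range m, w k with hW
  set P : ℕ → X := fun m => ∑ k ∈ Finset.range m, w k • z k with hP
  have hWt : Tendsto W atTop (𝓝 1) := hw1.tendsto_sum_nat
  have hPt : Tendsto P atTop (𝓝 T) := hT.tendsto_sum_nat
  have hvt : Tendsto (fun m => (W m)⁻¹ • P m) atTop (𝓝 T) := by
    have : Tendsto (fun m => (W m)⁻¹) atTop (𝓝 (1 : ℝ)⁻¹) := hWt.inv₀ (by norm_num)
    simpa using this.smul hPt
  have hev : ∀ᶠ m in atTop, (W m)⁻¹ • P m ∈ s := by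
    filter_upwards [hWt.eventually_const_lt (u := (1:ℝ)/2) (by norm_num)] with m hm
    have hWpos : 0 < W m := lt_trans (by norm_num) hm
    have := hs.sum_mem (t := Finset.range m) (w := fun k => w k / W m) (z := z)
      (fun i _ => div_nonneg (hw0 i) hWpos.le)
      (by rw [← Finset.sum_div]; exact div_self hWpos.ne')
      (fun i _ => hz i)
    have heq : ∑ k ∈ Finset.range m, (w k / W m) • z k = (W m)⁻¹ • P m := by
      rw [hP, Finset.smul_sum]
      refine Finset.sum_congr rfl fun k _ => ?_
      rw [div_eq_inv_mul, ← smul_smul]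
    rwa [heq] at this
  have : T ∈ closure s := mem_closure_of_tendsto hvt hev
  rwa [hcl.closure_eq] at this

set_option maxHeartbeats 1000000 in
private lemma core_contradiction {X : Type*} [NormedAddCommGroup X] [NormedSpace ℝ X]
    [CompleteSpace X]
    (B : Set (X →L[ℝ] ℝ)) (hB1 : ∀ f ∈ B, ‖f‖ ≤ 1)
    (hbdry : ∀ x : X, ‖x‖ = 1 → ∃ f ∈ B, f x = 1)
    (y : ℕ → X) (C : ℝ) (hbdd : ∀ n, ‖y n‖ ≤ C)
    (hcv : ∀ f ∈ B, Tendsto (fun n => f (y n)) atTop (𝓝 0))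
    (g : X →L[ℝ] ℝ) (ε₀ : ℝ) (hε₀ : 0 < ε₀) (hg : ∀ n, ε₀ ≤ g (y n)) : False := by
  have hC0 : (0:ℝ) ≤ C := le_trans (norm_nonneg _) (hbdd 0)
  have hgne : g ≠ 0 := by
    intro h
    have := hg 0
    rw [h] at this
    simp at this
    linarith
  have hgpos : 0 < ‖g‖ := norm_pos_iff.2 hgne
  set δ : ℝ := ε₀ / ‖g‖ with hδdef
  have hδ : 0 < δ := div_pos hε₀ hgpos
  set ε : ℝ := δ / 4 with hεdef
  have hε : 0 < ε := by positivity
  -- the sets K n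
  set K : ℕ → Set X := fun n => closure (convexHull ℝ (y '' Set.Ici n)) with hK
  have hKsub : ∀ n (s : Set X), Convex ℝ s → IsClosed s → (∀ j, n ≤ j → y j ∈ s) →
      K n ⊆ s := by
    intro n s hc hcl hm
    refine closure_minimal (convexHull_min ?_ hc) hcl
    rintro _ ⟨j, hj, rfl⟩
    exact hm j hj
  have hKconv : ∀ n, Convex ℝ (K n) := fun n => (convex_convexHull ℝ _).closure
  have hKcl : ∀ n, IsClosed (K n) := fun n => isClosed_closure
  have hKmem : ∀ n, y n ∈ K n := fun n =>
    subset_closure (subset_convexHull ℝ _ (mem_image_of_mem _ (mem_Ici.2 le_rfl)))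
  have hKanti : ∀ {m n : ℕ}, n ≤ m → K m ⊆ K n := by
    intro m n h
    exact closure_mono (convexHull_mono (image_mono (Ici_subset_Ici.2 h)))
  have hKbd : ∀ n, ∀ z ∈ K n, ‖z‖ ≤ C := by
    intro n z hz
    have : K n ⊆ Metric.closedBall 0 C := hKsub n _ (convex_closedBall _ _)
      Metric.isClosed_closedBall (fun j _ => by simpa [Metric.mem_closedBall] using hbdd j)
    simpa [Metric.mem_closedBall] using this hz
  have hKg : ∀ z ∈ K 0, ε₀ ≤ g z := by
    intro z hz
    have : K 0 ⊆ {w : X | ε₀ ≤ g w} := hKsub 0 _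
      (convex_halfSpace_ge (g.toLinearMap.isLinear) _)
      (isClosed_le continuous_const g.continuous) (fun j _ => hg j)
    exact this hz
  -- the near-minimizer choice
  have hpick : ∀ (n : ℕ) (v : X), ∃ z, z ∈ K n ∧ ∀ u ∈ K n,
      ‖v + ((2:ℝ)⁻¹)^n • z‖ ≤ ‖v + ((2:ℝ)⁻¹)^n • u‖ + ε * ((4:ℝ)⁻¹)^n := by
    intro n v
    set S : Set ℝ := (fun u => ‖v + ((2:ℝ)⁻¹)^n • u‖) '' K n with hS
    have hSne : S.Nonempty := ⟨_, ⟨y n, hKmem n, rfl⟩⟩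
    have hSbd : BddBelow S := ⟨0, by rintro _ ⟨u, hu, rfl⟩; positivity⟩
    have hlt : sInf S < sInf S + ε * ((4:ℝ)⁻¹)^n := by
      have : (0:ℝ) < ε * ((4:ℝ)⁻¹)^n := by positivity
      linarith
    obtain ⟨r, ⟨z, hzK, rfl⟩, hr⟩ := exists_lt_of_csInf_lt hSne hlt
    refine ⟨z, hzK, fun u hu => ?_⟩
    have : sInf S ≤ ‖v + ((2:ℝ)⁻¹)^n • u‖ := csInf_le hSbd ⟨u, hu, rfl⟩
    linarith
  -- the recursive construction
  set F : ℕ → X := fun n => Nat.rec 0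
    (fun m v => v + ((2:ℝ)⁻¹)^(m+1) • Classical.choose (hpick m v)) n with hF
  set ω : ℕ → X := fun n => Classical.choose (hpick n (F n)) with hω
  have hF0 : F 0 = 0 := rfl
  have hFsucc : ∀ n, F (n+1) = F n + ((2:ℝ)⁻¹)^(n+1) • ω n := fun n => rfl
  have hωspec : ∀ n, ω n ∈ K n ∧ ∀ u ∈ K n,
      ‖F n + ((2:ℝ)⁻¹)^n • ω n‖ ≤ ‖F n + ((2:ℝ)⁻¹)^n • u‖ + ε * ((4:ℝ)⁻¹)^n :=
    fun n => Classical.choose_spec (hpick n (F n))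
  have hωK : ∀ n, ω n ∈ K n := fun n => (hωspec n).1
  have hωbd : ∀ n, ‖ω n‖ ≤ C := fun n => hKbd n _ (hωK n)
  -- summability
  set u : ℕ → X := fun k => ((2:ℝ)⁻¹)^(k+1) • ω k with hu
  have hFsum : ∀ n, F n = ∑ k ∈ Finset.range n, u k := by
    intro n
    induction n with
    | zero => simp [hF0]
    | succ m ih => rw [Finset.sum_range_succ, hFsucc, ih]
  have husum : Summable u := by
    refine Summable.of_norm_bounded (g := fun k => C * ((2:ℝ)⁻¹)^k)
      ((summable_geometric_of_lt_one (by norm_num) (by norm_num)).mul_left C) (fun k => ?_)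
    rw [hu]
    simp only [norm_smul, norm_pow, norm_inv]
    have h1 : (0:ℝ) ≤ ((2:ℝ)⁻¹)^k := by positivity
    have h2 : ‖(2:ℝ)‖⁻¹ = (2:ℝ)⁻¹ := by norm_num
    rw [h2, pow_succ]
    have h3 : ((2:ℝ)⁻¹)^k * 2⁻¹ * ‖ω k‖ ≤ ((2:ℝ)⁻¹)^k * 2⁻¹ * C :=
      mul_le_mul_of_nonneg_left (hωbd k) (by positivity)
    nlinarith [h3]
  set Φ : X := ∑' k, u k with hΦ
  have hΦsum : HasSum u Φ := husum.hasSum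
  set ψ : ℕ → X := fun n => (2:ℝ)^n • (Φ - F n) with hψdef
  have htail : ∀ n, HasSum (fun i => u (i + n)) (Φ - F n) := by
    intro n
    have h1 : HasSum u ((Φ - F n) + ∑ i ∈ Finset.range n, u i) := by
      rw [← hFsum n, sub_add_cancel]
      exact hΦsum
    exact (hasSum_nat_add_iff n).2 h1
  have hψsum : ∀ n, HasSum (fun i => ((2:ℝ)⁻¹)^(i+1) • ω (i + n)) (ψ n) := by
    intro n
    have h2 := (htail n).const_smul ((2:ℝ)^n)
    have h3 : ∀ i : ℕ, (2:ℝ)^n • u (i + n) = ((2:ℝ)⁻¹)^(i+1) • ω (i + n) := by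
      intro i
      rw [hu]
      dsimp only
      rw [smul_smul]
      congr 1
      rw [inv_pow, inv_pow, show i + n + 1 = (i+1) + n by ring, pow_add, mul_inv]
      have h4 : ((2:ℝ)^n) ≠ 0 := by positivity
      field_simp
    simpa only [h3] using h2
  have hw1 : HasSum (fun i : ℕ => ((2:ℝ)⁻¹)^(i+1)) 1 := by
    have h5 := hasSum_geometric_two' 1
    have h6 : ∀ i : ℕ, (1:ℝ) / 2 / 2^i = ((2:ℝ)⁻¹)^(i+1) := by
      intro i
      rw [pow_succ, inv_pow]
      field_simp
    simpa only [h6] using h5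
  have hψK : ∀ n, ψ n ∈ K n := fun n =>
    hasSum_mem_of_convex (K n) (hKconv n) (hKcl n)
      (fun i => ω (i + n)) (fun i => hKanti (Nat.le_add_left n i) (hωK (i + n)))
      (fun i => ((2:ℝ)⁻¹)^(i+1)) (fun i => by positivity) hw1 (ψ n) (hψsum n)
  have hΦn : ∀ n, Φ = F n + ((2:ℝ)⁻¹)^n • ψ n := by
    intro n
    simp only [hψdef]
    rw [smul_smul, ← mul_pow]
    norm_num
  have hψ0 : ψ 0 = Φ := by simp [hψdef, hF0]
  have hΦK0 : Φ ∈ K 0 := hψ0 ▸ hψK 0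
  have hΦg : ε₀ ≤ g Φ := hKg _ hΦK0
  have hΦnorm : δ ≤ ‖Φ‖ := by
    have h1 : g Φ ≤ ‖g‖ * ‖Φ‖ := by
      calc g Φ ≤ |g Φ| := le_abs_self _
        _ = ‖g Φ‖ := (Real.norm_eq_abs _).symm
        _ ≤ ‖g‖ * ‖Φ‖ := g.le_opNorm Φ
    rw [hδdef, div_le_iff₀ hgpos]
    nlinarith
  have hΦne : Φ ≠ 0 := by
    intro h
    rw [h] at hΦnorm
    simp at hΦnorm
    linarith
  obtain ⟨b, hbB, hb1⟩ := hbdry (‖Φ‖⁻¹ • Φ) (norm_smul_inv_norm (𝕜 := ℝ) hΦne)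
  have hΦnz : ‖Φ‖ ≠ 0 := norm_ne_zero_iff.2 hΦne
  have hbΦ : b Φ = ‖Φ‖ := by
    rw [map_smul, smul_eq_mul] at hb1
    field_simp at hb1
    linarith
  have hble : ∀ z : X, b z ≤ ‖z‖ := by
    intro z
    have h1 : ‖b z‖ ≤ ‖b‖ * ‖z‖ := b.le_opNorm z
    have h2 : ‖b‖ * ‖z‖ ≤ 1 * ‖z‖ := mul_le_mul_of_nonneg_right (hB1 b hbB) (norm_nonneg z)
    calc b z ≤ |b z| := le_abs_self _
      _ = ‖b z‖ := (Real.norm_eq_abs _).symm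
      _ ≤ ‖z‖ := by linarith
  have hstep : ∀ n, b (ψ n) - ε * ((2:ℝ)⁻¹)^n ≤ b (ψ (n+1)) := by
    intro n
    have hA1 : b (F n) + ((2:ℝ)⁻¹)^n * b (ω n) ≤ ‖Φ‖ + ε * ((4:ℝ)⁻¹)^n := by
      have h1 := (hωspec n).2 (ψ n) (hψK n)
      rw [← hΦn n] at h1
      calc b (F n) + ((2:ℝ)⁻¹)^n * b (ω n) = b (F n + ((2:ℝ)⁻¹)^n • ω n) := by
            rw [map_add, map_smul, smul_eq_mul]
        _ ≤ ‖F n + ((2:ℝ)⁻¹)^n • ω n‖ := hble _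
        _ ≤ ‖Φ‖ + ε * ((4:ℝ)⁻¹)^n := h1
    have hA2 : b (F n) + ((2:ℝ)⁻¹)^n * b (ψ n) = ‖Φ‖ := by
      rw [← smul_eq_mul, ← map_smul, ← map_add, ← hΦn n, hbΦ]
    have hA3 : b (ψ (n+1)) = 2 * b (ψ n) - b (ω n) := by
      have hs1 : (2:ℝ)^(n+1) * ((2:ℝ)⁻¹)^(n+1) = 1 := by rw [← mul_pow]; norm_num
      have hs2 : (2:ℝ)^(n+1) = 2 * (2:ℝ)^n := by rw [pow_succ]; ring
      have hv : ψ (n+1) = (2:ℝ) • ψ n - ω n := by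
        simp only [hψdef]
        rw [hFsucc, sub_add_eq_sub_sub, smul_sub ((2:ℝ)^(n+1)), smul_smul, hs1, one_smul,
          hs2, mul_smul]
      rw [hv, map_sub, map_smul, smul_eq_mul]
    have ht : (0:ℝ) < ((2:ℝ)⁻¹)^n := by positivity
    have h4 : ((4:ℝ)⁻¹)^n = ((2:ℝ)⁻¹)^n * ((2:ℝ)⁻¹)^n := by rw [← mul_pow]; norm_num
    rw [h4] at hA1
    have h5 : b (ω n) - b (ψ n) ≤ ε * ((2:ℝ)⁻¹)^n := by
      have h6 : ((2:ℝ)⁻¹)^n * (b (ω n) - b (ψ n)) ≤ ((2:ℝ)⁻¹)^n * (ε * ((2:ℝ)⁻¹)^n) := by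
        ring_nf
        ring_nf at hA1 hA2
        linarith [hA1, hA2]
      exact le_of_mul_le_mul_left h6 ht
    linarith [hA3, h5]
  have hlow : ∀ n, ‖Φ‖ - ε * (2 - 2 * ((2:ℝ)⁻¹)^n) ≤ b (ψ n) := by
    intro n
    induction n with
    | zero =>
      rw [hψ0, hbΦ]
      norm_num
    | succ m ih =>
      have h1 := hstep m
      have hp : ε * ((2:ℝ)⁻¹)^m = 2 * (ε * ((2:ℝ)⁻¹)^(m+1)) := by rw [pow_succ]; ring
      linarith
  have hbev : ∀ᶠ j in atTop, b (y j) < ε := (hcv b hbB).eventually_lt_const hε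
  obtain ⟨N, hN⟩ := eventually_atTop.1 hbev
  have hψNle : b (ψ N) ≤ ε := by
    have hsub : K N ⊆ {z : X | b z ≤ ε} := hKsub N _
      (convex_halfSpace_le (b.toLinearMap.isLinear) _)
      (isClosed_le b.continuous continuous_const) (fun j hj => (hN j hj).le)
    exact hsub (hψK N)
  have h3 : (0:ℝ) ≤ ε * ((2:ℝ)⁻¹)^N := by positivity
  have hE : ε * (2 - 2 * ((2:ℝ)⁻¹)^N) ≤ 2 * ε := by nlinarith
  linarith [hlow N, hψNle, hΦnorm, hδ]

theorem stmt_15 {X : Type*} [NormedAddCommGroup X] [NormedSpace ℝ X] [CompleteSpace X]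
    (B : Set (X →L[ℝ] ℝ)) (hB1 : ∀ f ∈ B, ‖f‖ ≤ 1)
    (hbdry : ∀ x : X, ‖x‖ = 1 → ∃ f ∈ B, f x = 1)
    (x : ℕ → X) (C : ℝ) (hbdd : ∀ n, ‖x n‖ ≤ C)
    (hconv : ∀ f ∈ B, Filter.Tendsto (fun n => f (x n)) Filter.atTop (nhds 0)) :
    ∀ g : X →L[ℝ] ℝ, Filter.Tendsto (fun n => g (x n)) Filter.atTop (nhds 0) := by
  intro g
  by_contra hcon
  rw [Metric.tendsto_atTop] at hcon
  push_neg at hcon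
  obtain ⟨ε, hε, hfreq⟩ := hcon
  have hfreq' : ∃ᶠ n in atTop, ε ≤ |g (x n)| := by
    rw [frequently_atTop]
    intro N
    obtain ⟨n, hn, h⟩ := hfreq N
    refine ⟨n, hn, ?_⟩
    rw [Real.dist_eq, sub_zero] at h
    exact h
  have hor : (∃ᶠ n in atTop, ε ≤ g (x n)) ∨ (∃ᶠ n in atTop, ε ≤ -g (x n)) := by
    rw [← frequently_or_distrib]
    exact hfreq'.mono (fun n hn => le_abs.1 hn)
  rcases hor with h | h
  · obtain ⟨φ, hφ, hP⟩ := extraction_of_frequently_atTop h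
    exact core_contradiction B hB1 hbdry (x ∘ φ) C (fun n => hbdd (φ n))
      (fun f hf => (hconv f hf).comp hφ.tendsto_atTop) g ε hε hP
  · obtain ⟨φ, hφ, hP⟩ := extraction_of_frequently_atTop h
    refine core_contradiction B hB1 hbdry (x ∘ φ) C (fun n => hbdd (φ n))
      (fun f hf => (hconv f hf).comp hφ.tendsto_atTop) (-g) ε hε ?_
    intro n
    simpa using hP n
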